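/- arXiv:1502.02978 — 3 statements merged into one kernel-verified Lean document; each statement's English description precedes it below -/
import Mathlib

section
/- Let G and H be finite groups such that the center of G is trivial and N(G) = N(H). Then every prime divisor of |G| is a prime divisor of |H|, i.e. π(G) ⊆ π(H). -/
/-- The set of conjugacy class sizes of a group `G`. -/
def classSizes (G : Type*) [Group G] : Set ℕ :=
  {n | ∃ g : G, n = Nat.card {h : G | IsConj g h}}

/-- A conjugacy class size divides the order of the group. -/
lemma classSize_dvd_card (G : Type*) [Group G] [Finite G] (g : G) :
    Nat.card {h : G | IsConj g h} ∣ Nat.card G := by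
  have hset : {h : G | IsConj g h} = MulAction.orbit (ConjAct G) g := by
    ext h
    rw [ConjAct.mem_orbit_conjAct]
    exact isConj_comm
  rw [hset, Nat.card_congr (MulAction.orbitEquivQuotientStabilizer (ConjAct G) g),
    ← Subgroup.index_eq_card]
  exact (MulAction.stabilizer (ConjAct G) g).index_dvd_card

/-- A finite group is not the union of the conjugates of a proper subgroup. -/
lemma eq_top_of_conjugates_cover (G : Type*) [Group G] [Finite G] (K : Subgroup G)
    (hc : ∀ g : G, ∃ c : G, c * g * c⁻¹ ∈ K) : K = ⊤ := by
  classical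
  have := Fintype.ofFinite G
  letI : Fintype (G ⧸ K) := Fintype.ofFinite _
  letI : ∀ a : G, Fintype (MulAction.fixedBy (G ⧸ K) a) := fun a => Fintype.ofFinite _
  letI : Fintype (MulAction.orbitRel.Quotient G (G ⧸ K)) := Fintype.ofFinite _
  -- Burnside's lemma
  have hsum : (∑ a : G, Fintype.card (MulAction.fixedBy (G ⧸ K) a)) =
      Fintype.card (MulAction.orbitRel.Quotient G (G ⧸ K)) * Fintype.card G :=
    MulAction.sum_card_fixedBy_eq_card_orbits_mul_card_group G (G ⧸ K)
  -- the action on `G ⧸ K` is transitive, so there is exactly one orbit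
  have hΩ : Fintype.card (MulAction.orbitRel.Quotient G (G ⧸ K)) = 1 := by
    have hsub : Subsingleton (MulAction.orbitRel.Quotient G (G ⧸ K)) := by
      constructor
      rintro ⟨x⟩ ⟨y⟩
      obtain ⟨c, hc⟩ := MulAction.exists_smul_eq G y x
      exact Quotient.sound ⟨c, hc⟩
    have hne : Nonempty (MulAction.orbitRel.Quotient G (G ⧸ K)) := ⟨⟦((1 : G) : G ⧸ K)⟧⟩
    exact le_antisymm (Fintype.card_le_one_iff_subsingleton.mpr hsub) Fintype.card_pos
  rw [hΩ, one_mul] at hsum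
  -- every element has a fixed point on `G ⧸ K`
  have hpos : ∀ a : G, 1 ≤ Fintype.card (MulAction.fixedBy (G ⧸ K) a) := by
    intro a
    obtain ⟨c, hcK⟩ := hc a
    refine Fintype.card_pos_iff.mpr ⟨⟨(↑(c⁻¹) : G ⧸ K), ?_⟩⟩
    show a • ((c⁻¹ : G) : G ⧸ K) = ((c⁻¹ : G) : G ⧸ K)
    have : a • ((c⁻¹ : G) : G ⧸ K) = ((a * c⁻¹ : G) : G ⧸ K) := rfl
    rw [this, QuotientGroup.eq]
    have := K.inv_mem hcK
    have h2 : (a * c⁻¹)⁻¹ * c⁻¹ = (c * a * c⁻¹)⁻¹ := by group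
    rw [h2]
    exact K.inv_mem hcK
  -- the identity element fixes everything
  have hone : Fintype.card (MulAction.fixedBy (G ⧸ K) (1 : G)) = K.index := by
    have huniv : MulAction.fixedBy (G ⧸ K) (1 : G) = Set.univ := by
      ext x; simp [MulAction.fixedBy]
    rw [Subgroup.index_eq_card, Nat.card_eq_fintype_card]
    exact Fintype.card_congr ((Equiv.setCongr huniv).trans (Equiv.Set.univ _))
  -- counting
  have hbound : Fintype.card (MulAction.fixedBy (G ⧸ K) (1 : G)) +
      ∑ a ∈ Finset.univ.erase (1 : G), Fintype.card (MulAction.fixedBy (G ⧸ K) a) =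
      Fintype.card G := by
    rw [Finset.add_sum_erase Finset.univ
      (fun a => Fintype.card (MulAction.fixedBy (G ⧸ K) a)) (Finset.mem_univ (1 : G))]
    exact hsum
  have htail : (Finset.univ.erase (1 : G)).card ≤
      ∑ a ∈ Finset.univ.erase (1 : G), Fintype.card (MulAction.fixedBy (G ⧸ K) a) := by
    calc (Finset.univ.erase (1 : G)).card
        = ∑ _a ∈ Finset.univ.erase (1 : G), 1 := by simp
      _ ≤ _ := Finset.sum_le_sum fun a _ => hpos a
  have hcarderase : (Finset.univ.erase (1 : G)).card = Fintype.card G - 1 := by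
    rw [Finset.card_erase_of_mem (Finset.mem_univ 1), Finset.card_univ]
  have hGpos : 1 ≤ Fintype.card G := Fintype.card_pos
  have hidx : K.index ≠ 0 := K.index_ne_zero_of_finite
  rw [hone] at hbound
  rw [hcarderase] at htail
  have : K.index = 1 := by omega
  exact Subgroup.index_eq_one.mp this

/-- If the center is trivial, every prime divisor of the order divides some class size. -/
lemma exists_classSize_dvd (G : Type*) [Group G] [Finite G] (hZ : Subgroup.center G = ⊥)
    (q : ℕ) (hq : q.Prime) (hdvd : q ∣ Nat.card G) :
    ∃ g : G, q ∣ Nat.card {h : G | IsConj g h} := by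
  by_contra hcon
  push_neg at hcon
  haveI : Fact q.Prime := ⟨hq⟩
  obtain ⟨P⟩ : Nonempty (Sylow q G) := Sylow.nonempty
  -- every conjugacy class contains an element centralizing P
  have hmeet : ∀ g : G, ∃ h : G, IsConj g h ∧ ∀ p ∈ P, p * h = h * p := by
    intro g
    letI : MulAction ↥(P : Subgroup G) {h : G // IsConj g h} :=
      { smul := fun p h => ⟨(p : G) * (h : G) * (p : G)⁻¹, h.2.trans (isConj_iff.mpr ⟨p, rfl⟩)⟩
        one_smul := fun h => Subtype.ext (by
          show ((1 : ↥(P : Subgroup G)) : G) * (h : G) * ((1 : ↥(P : Subgroup G)) : G)⁻¹ = (h : G)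
          simp)
        mul_smul := fun p p' h => Subtype.ext (by
          show ((p * p' : ↥(P : Subgroup G)) : G) * (h : G) * ((p * p' : ↥(P : Subgroup G)) : G)⁻¹
            = (p : G) * ((p' : G) * (h : G) * (p' : G)⁻¹) * (p : G)⁻¹
          push_cast
          group) }
    have hmod := P.isPGroup'.card_modEq_card_fixedPoints {h : G // IsConj g h}
    have hnd : ¬ q ∣ Nat.card {h : G // IsConj g h} := hcon g
    have hfix : Nat.card (MulAction.fixedPoints ↥(P : Subgroup G) {h : G // IsConj g h}) ≠ 0 := by
      intro h0
      rw [h0] at hmod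
      exact hnd ((Nat.modEq_zero_iff_dvd).mp hmod)
    have hne : Nonempty (MulAction.fixedPoints ↥(P : Subgroup G) {h : G // IsConj g h}) :=
      (Nat.card_ne_zero.mp hfix).1
    obtain ⟨⟨⟨h, hh⟩, hfixed⟩⟩ := hne
    refine ⟨h, hh, fun p hp => ?_⟩
    have heq : p * h * p⁻¹ = h :=
      congrArg Subtype.val (MulAction.mem_fixedPoints.mp hfixed ⟨p, hp⟩)
    calc p * h = p * h * p⁻¹ * p := by group
      _ = h * p := by rw [heq]
  -- so the conjugates of the centralizer of P cover G
  have hcov : Subgroup.centralizer (P : Set G) = ⊤ := by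
    apply eq_top_of_conjugates_cover
    intro g
    obtain ⟨h, hconj, hcomm⟩ := hmeet g
    obtain ⟨c, hc⟩ := isConj_iff.mp hconj
    refine ⟨c, ?_⟩
    rw [hc]
    exact Subgroup.mem_centralizer_iff.mpr fun p hp => hcomm p hp
  -- hence P is central, hence trivial
  have hPle : (P : Subgroup G) ≤ Subgroup.center G := by
    intro p hp
    rw [Subgroup.mem_center_iff]
    intro g
    have hg : g ∈ Subgroup.centralizer (P : Set G) := hcov ▸ Subgroup.mem_top g
    exact (Subgroup.mem_centralizer_iff.mp hg p hp).symm
  rw [hZ, le_bot_iff] at hPle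
  -- but P has order divisible by q
  have hcard : Nat.card ↥(P : Subgroup G) = q ^ (Nat.card G).factorization q :=
    P.card_eq_multiplicity
  have hpos : 0 < (Nat.card G).factorization q :=
    hq.factorization_pos_of_dvd Nat.card_pos.ne' hdvd
  have hbot : Nat.card ↥(P : Subgroup G) = 1 := by
    rw [hPle]
    exact Subgroup.card_bot
  rw [hcard] at hbot
  have hqd : q ∣ 1 := hbot ▸ dvd_pow_self q hpos.ne'
  exact hq.one_lt.ne' (Nat.dvd_one.mp hqd)

theorem primeDivisors_subset_of_classSizes_eq (G H : Type*) [Group G] [Finite G]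
    [Group H] [Finite H] (hZ : Subgroup.center G = ⊥)
    (hN : classSizes G = classSizes H) :
    ∀ q : ℕ, q.Prime → q ∣ Nat.card G → q ∣ Nat.card H := by
  intro q hq hdvd
  obtain ⟨g, hg⟩ := exists_classSize_dvd G hZ q hq hdvd
  have hmem : Nat.card {h : G | IsConj g h} ∈ classSizes G := ⟨g, rfl⟩
  rw [hN] at hmem
  obtain ⟨g', hg'⟩ := hmem
  rw [hg'] at hg
  exact hg.trans (classSize_dvd_card H g')
end

section
/- Let K be a normal subgroup of a finite group G, let Ḡ = G/K, and let x ∈ G be an element whose order is coprime to |K|. Then the centralizer of the image x̄ of x in Ḡ satisfies C_Ḡ(x̄) = C_G(x)K/K, i.e. C_Ḡ(x̄) equals the image of the centralizer C_G(x) under the quotient map G → G/K. -/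
open Subgroup QuotientGroup

/-- Prime-power case: fixed point of a `p`-element conjugating a coset of `K`. -/
lemma pp_case {G : Type*} [Group G] [Finite G] (K : Subgroup G) [K.Normal]
    (p : ℕ) [Fact p.Prime] (x g : G) (n : ℕ) (hx : x ^ p ^ n = 1)
    (hK : ¬ p ∣ Nat.card K)
    (hg : Commute (QuotientGroup.mk x : G ⧸ K) (QuotientGroup.mk g)) :
    ∃ c ∈ Subgroup.centralizer {x}, (QuotientGroup.mk c : G ⧸ K) = QuotientGroup.mk g := by
  set P := Subgroup.zpowers x with hP
  have hPp : IsPGroup p P := by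
    intro z
    refine ⟨n, ?_⟩
    obtain ⟨m, hm⟩ := z.2
    ext
    push_cast
    rw [← hm, ← zpow_natCast (x ^ m : G) (p ^ n), ← zpow_mul, mul_comm, zpow_mul,
      zpow_natCast, hx, one_zpow]
  -- mk of any element of P commutes with mk g
  have hcomm : ∀ z : P, Commute (QuotientGroup.mk (z : G) : G ⧸ K) (QuotientGroup.mk g) := by
    intro z
    obtain ⟨m, hm⟩ := z.2
    rw [← hm]
    have : (QuotientGroup.mk (x ^ m : G) : G ⧸ K) = (QuotientGroup.mk x : G ⧸ K) ^ m := by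
      rw [← QuotientGroup.mk_zpow]
    rw [this]
    exact hg.zpow_left m
  let S := {y : G // (QuotientGroup.mk y : G ⧸ K) = QuotientGroup.mk g}
  letI : MulAction P S :=
    { smul := fun z y => ⟨(z : G) * y * (z : G)⁻¹, by
        rw [QuotientGroup.mk_mul, QuotientGroup.mk_mul, QuotientGroup.mk_inv, y.2,
          (hcomm z).eq, mul_inv_cancel_right]⟩
      one_smul := fun y => Subtype.ext (by show ((1:P):G) * y * ((1:P):G)⁻¹ = y; simp)
      mul_smul := fun z w y => Subtype.ext (by
        show ((z*w : P) : G) * y * ((z*w : P) : G)⁻¹ =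
          (z : G) * ((w : G) * y * (w : G)⁻¹) * (z : G)⁻¹
        push_cast
        group) }
  have hcard : Nat.card S = Nat.card K := by
    refine Nat.card_congr ⟨fun y => ⟨g⁻¹ * y, ?_⟩, fun k => ⟨g * k, ?_⟩, ?_, ?_⟩
    · rw [← QuotientGroup.eq]
      exact y.2.symm
    · rw [QuotientGroup.mk_mul, (QuotientGroup.eq_one_iff (k : G)).2 k.2, mul_one]
    · intro y; ext; simp
    · intro k; ext; simp
  have hfix : (MulAction.fixedPoints P S).Nonempty := by
    apply hPp.nonempty_fixed_point_of_prime_not_dvd_card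
    rwa [hcard]
  obtain ⟨a, ha⟩ := hfix
  refine ⟨a.1, ?_, a.2⟩
  rw [Subgroup.mem_centralizer_iff]
  intro y hy
  rw [Set.mem_singleton_iff] at hy
  rw [hy]
  have := ha ⟨x, Subgroup.mem_zpowers x⟩
  have h2 : x * a.1 * x⁻¹ = a.1 := congrArg Subtype.val this
  calc x * a.1 = (x * a.1 * x⁻¹) * x := by group
  _ = a.1 * x := by rw [h2]


universe u

theorem key (n : ℕ) : ∀ (G : Type u) [Group G] [Finite G] (K : Subgroup G) [K.Normal]
    (x g : G), orderOf x = n → n.Coprime (Nat.card K) →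
    Commute (QuotientGroup.mk x : G ⧸ K) (QuotientGroup.mk g) →
    ∃ c ∈ Subgroup.centralizer {x}, (QuotientGroup.mk c : G ⧸ K) = QuotientGroup.mk g := by
  induction n using Nat.strong_induction_on with
  | _ n ih =>
    intro G _ _ K _ x g hord hcop hcomm
    by_cases h1 : n = 1
    · subst h1
      have hx1 : x = 1 := orderOf_eq_one_iff.mp hord
      refine ⟨g, ?_, rfl⟩
      rw [Subgroup.mem_centralizer_iff]
      intro y hy
      rw [Set.mem_singleton_iff] at hy
      rw [hy, hx1, one_mul, mul_one]
    have hn0 : n ≠ 0 := by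
      rw [← hord]; exact (orderOf_pos x).ne'
    set p := n.minFac with hpdef
    have hp : p.Prime := Nat.minFac_prime h1
    haveI : Fact p.Prime := ⟨hp⟩
    set a := n.factorization p with hadef
    set m := ordCompl[p] n with hmdef
    have hpm : p ^ a * m = n := Nat.ordProj_mul_ordCompl_eq_self n p
    have hpdvd : p ∣ n := Nat.minFac_dvd n
    have hKp : ¬ p ∣ Nat.card K := by
      intro hd
      have : p ∣ Nat.gcd n (Nat.card K) := Nat.dvd_gcd hpdvd hd
      rw [Nat.Coprime.gcd_eq_one hcop] at this
      exact hp.ne_one (Nat.eq_one_of_dvd_one this)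
    have hu1 : (x ^ m) ^ p ^ a = 1 := by
      rw [← pow_mul, mul_comm, hpm, ← hord, pow_orderOf_eq_one]
    have hgu : Commute (QuotientGroup.mk (x ^ m) : G ⧸ K) (QuotientGroup.mk g) := by
      rw [QuotientGroup.mk_pow]
      exact hcomm.pow_left m
    obtain ⟨c, hc, hcg⟩ := pp_case K p (x ^ m) g a hu1 hKp hgu
    by_cases hm1 : m = 1
    · rw [hm1, pow_one] at hc
      exact ⟨c, hc, hcg⟩
    have ha0 : 0 < a := hp.factorization_pos_of_dvd hn0 hpdvd
    have hpa1 : 1 < p ^ a := Nat.one_lt_pow ha0.ne' hp.one_lt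
    have hm_lt : m < n := Nat.div_lt_self (Nat.pos_of_ne_zero hn0) hpa1
    have hmdvd : m ∣ n := Nat.ordCompl_dvd n p
    set u := x ^ m with hudef
    set v := x ^ (p ^ a) with hvdef
    have hov : orderOf v = m := by
      rw [hvdef, orderOf_pow, hord, Nat.gcd_eq_right (Nat.ordProj_dvd n p)]
    have huv : Commute u v := (Commute.refl x).pow_pow m (p ^ a)
    set H := Subgroup.centralizer {u} with hHdef
    have hvH : v ∈ H := by
      rw [hHdef, Subgroup.mem_centralizer_iff]
      intro y hy
      rw [Set.mem_singleton_iff] at hy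
      rw [hy]
      exact huv.eq
    set K' := K.subgroupOf H with hK'def
    have hcard : Nat.card K' ∣ Nat.card K := by
      let f : K' →* K :=
        { toFun := fun k => ⟨((k : H) : G), k.2⟩
          map_one' := rfl
          map_mul' := fun _ _ => rfl }
      have hf : Function.Injective f := by
        intro k l hkl
        have : ((k : H) : G) = ((l : H) : G) := congrArg (fun z : ↥K => (z : G)) hkl
        exact Subtype.ext (Subtype.ext this)
      exact Subgroup.card_dvd_of_injective f hf
    have hcop' : m.Coprime (Nat.card K') :=
      Nat.Coprime.coprime_dvd_right hcard (Nat.Coprime.coprime_dvd_left hmdvd hcop)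
    set V : H := ⟨v, hvH⟩ with hVdef
    set C : H := ⟨c, hc⟩ with hCdef
    have hoV : orderOf V = m := by
      rw [← hov]
      exact (orderOf_injective H.subtype H.subtype_injective V).symm
    have hgv : Commute (QuotientGroup.mk v : G ⧸ K) (QuotientGroup.mk g) := by
      rw [hvdef, QuotientGroup.mk_pow]
      exact hcomm.pow_left (p ^ a)
    have hvc : (v * c)⁻¹ * (c * v) ∈ K := by
      rw [← QuotientGroup.eq, QuotientGroup.mk_mul, QuotientGroup.mk_mul, hcg]
      exact hgv.eq
    have hVC : Commute (QuotientGroup.mk V : H ⧸ K') (QuotientGroup.mk C) := by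
      show QuotientGroup.mk V * QuotientGroup.mk C = QuotientGroup.mk C * QuotientGroup.mk V
      rw [← QuotientGroup.mk_mul, ← QuotientGroup.mk_mul, QuotientGroup.eq]
      rw [Subgroup.mem_subgroupOf]
      exact hvc
    obtain ⟨d, hd, hdC⟩ := ih m hm_lt H K' V C hoV hcop' hVC
    have hdu : Commute (d : G) u :=
      (Subgroup.mem_centralizer_iff.mp d.2 u (Set.mem_singleton u)).symm
    have hdv : Commute (d : G) v := by
      have := Subgroup.mem_centralizer_iff.mp hd V (Set.mem_singleton V)
      have h2 : v * (d : G) = (d : G) * v := congrArg Subtype.val this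
      exact h2.symm
    have hcopm : Nat.Coprime (p ^ a) m := (Nat.coprime_ordCompl hp hn0).pow_left a
    set A := Nat.gcdA (p ^ a) m with hAdef
    set B := Nat.gcdB (p ^ a) m with hBdef
    have hg1 := Nat.gcd_eq_gcd_ab (p ^ a) m
    rw [Nat.Coprime.gcd_eq_one hcopm] at hg1
    have hbez : (1 : ℤ) = ((p ^ a : ℕ) : ℤ) * A + ((m : ℕ) : ℤ) * B := by exact_mod_cast hg1
    have hxuv : x = v ^ A * u ^ B := by
      have h3 : x = x ^ (((p ^ a : ℕ) : ℤ) * A + ((m : ℕ) : ℤ) * B) := by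
        rw [← hbez, zpow_one]
      rw [hvdef, hudef]
      conv_lhs => rw [h3]
      rw [zpow_add, zpow_mul, zpow_mul, zpow_natCast, zpow_natCast]
    have hdx : Commute (d : G) x := by
      rw [hxuv]
      exact (hdv.zpow_right A).mul_right (hdu.zpow_right B)
    refine ⟨(d : G), ?_, ?_⟩
    · rw [Subgroup.mem_centralizer_iff]
      intro y hy
      rw [Set.mem_singleton_iff] at hy
      rw [hy]
      exact hdx.symm.eq
    · have hdC' : (d : H)⁻¹ * C ∈ K' := QuotientGroup.eq.mp hdC
      rw [Subgroup.mem_subgroupOf] at hdC'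
      have : ((d : G))⁻¹ * c ∈ K := hdC'
      rw [QuotientGroup.eq.mpr this]
      exact hcg

theorem centralizer_quotient_eq_map_of_coprime (G : Type*) [Group G] [Finite G]
    (K : Subgroup G) [K.Normal] (x : G)
    (h : (orderOf x).Coprime (Nat.card K)) :
    Subgroup.centralizer {(QuotientGroup.mk x : G ⧸ K)} =
      Subgroup.map (QuotientGroup.mk' K) (Subgroup.centralizer {x}) := by
  apply le_antisymm
  · intro ξ hξ
    obtain ⟨g, rfl⟩ := QuotientGroup.mk'_surjective K ξ
    have hcomm : Commute (QuotientGroup.mk x : G ⧸ K) (QuotientGroup.mk g) :=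
      (Subgroup.mem_centralizer_iff.mp hξ _ (Set.mem_singleton _))
    obtain ⟨c, hc, hcg⟩ := key (orderOf x) G K x g rfl h hcomm
    exact ⟨c, hc, hcg⟩
  · rintro ξ ⟨c, hc, rfl⟩
    rw [Subgroup.mem_centralizer_iff]
    intro y hy
    rw [Set.mem_singleton_iff] at hy
    rw [hy]
    have : x * c = c * x := Subgroup.mem_centralizer_iff.mp hc x (Set.mem_singleton x)
    show QuotientGroup.mk x * QuotientGroup.mk c = QuotientGroup.mk c * QuotientGroup.mk x
    rw [← QuotientGroup.mk_mul, ← QuotientGroup.mk_mul, this]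
end

section
/- Let G be a finite abelian group, let q be a prime not dividing |G|, and let g be an automorphism of G of order q. Then q divides |[G,g]| − 1, where [G,g] is the subgroup of G generated by the elements x⁻¹·g(x) for x ∈ G. -/
theorem prime_dvd_card_commutator_sub_one (G : Type*) [CommGroup G] [Finite G]
    (q : ℕ) (hq : q.Prime) (hqG : ¬ q ∣ Nat.card G)
    (g : MulAut G) (hg : orderOf g = q) :
    q ∣ Nat.card (Subgroup.closure {y : G | ∃ x : G, y = x⁻¹ * g x}) - 1 := by
  haveI : Fact q.Prime := ⟨hq⟩
  set S : Set G := {y : G | ∃ x : G, y = x⁻¹ * g x} with hS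
  set H : Subgroup G := Subgroup.closure S with hH
  -- g maps H into H
  have hgH : ∀ h ∈ H, g h ∈ H := by
    intro h hh
    induction hh using Subgroup.closure_induction with
    | mem y hy =>
      obtain ⟨x, rfl⟩ := hy
      apply Subgroup.subset_closure
      exact ⟨g x, by simp [mul_comm]⟩
    | one => simpa using one_mem H
    | mul a b _ _ ha hb => simpa using mul_mem ha hb
    | inv a _ ha => simpa using inv_mem ha
  have hgH' : ∀ h ∈ H, g⁻¹ h ∈ H := by
    intro h hh
    induction hh using Subgroup.closure_induction with
    | mem y hy =>
      obtain ⟨x, rfl⟩ := hy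
      apply Subgroup.subset_closure
      refine ⟨g⁻¹ x, ?_⟩
      simp
    | one => simpa using one_mem H
    | mul a b _ _ ha hb => simpa using mul_mem ha hb
    | inv a _ ha => simpa using inv_mem ha
  have key : ∀ n : ℤ, ∀ h ∈ H, (g ^ n : MulAut G) h ∈ H := by
    intro n
    induction n using Int.induction_on with
    | zero => simpa using fun h hh => hh
    | succ k ih =>
      intro h hh
      have : (g ^ ((k : ℤ) + 1) : MulAut G) h = (g ^ (k : ℤ) : MulAut G) (g h) := by
        rw [zpow_add, zpow_one]; rfl
      rw [this]
      exact ih _ (hgH h hh)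
    | pred k ih =>
      intro h hh
      have : (g ^ (-(k : ℤ) - 1) : MulAut G) h = (g ^ (-(k : ℤ)) : MulAut G) (g⁻¹ h) := by
        rw [sub_eq_add_neg, zpow_add, zpow_neg_one]; rfl
      rw [this]
      exact ih _ (hgH' h hh)
  -- action of zpowers g on H
  letI : MulAction (Subgroup.zpowers g) H :=
    { smul := fun a h => ⟨a.1 h.1, by
        obtain ⟨n, hn⟩ := a.2
        exact hn ▸ key n h.1 h.2⟩
      one_smul := fun h => Subtype.ext rfl
      mul_smul := fun a b h => Subtype.ext rfl }
  have hsmul : ∀ (a : Subgroup.zpowers g) (h : H), (a • h : H).1 = a.1 h.1 := fun _ _ => rfl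
  -- zpowers g is a q-group
  have hpg : IsPGroup q (Subgroup.zpowers g) :=
    IsPGroup.of_card (n := 1) (by rw [Nat.card_zpowers, hg, pow_one])
  have hmod := hpg.card_modEq_card_fixedPoints H
  -- fixed points are trivial
  have hq1 : ∀ h : G, h ∈ H → g h = h → h = 1 := by
    intro h hh hfix
    -- norm homomorphism
    have hN : ∀ x ∈ H, ∏ i ∈ Finset.range q, (g ^ i : MulAut G) x = 1 := by
      intro x hx
      induction hx using Subgroup.closure_induction with
      | mem y hy =>
        obtain ⟨z, rfl⟩ := hy
        have : ∀ i, (g ^ i : MulAut G) (z⁻¹ * g z) =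
            ((g ^ i : MulAut G) z)⁻¹ * (g ^ (i + 1) : MulAut G) z := by
          intro i
          rw [pow_succ]
          simp [map_mul, map_inv]
        simp_rw [this]
        rw [Finset.prod_mul_distrib, Finset.prod_inv_distrib]
        have h1 : ∏ i ∈ Finset.range q, (g ^ (i + 1) : MulAut G) z =
            (∏ i ∈ Finset.range q, (g ^ i : MulAut G) z) * (g ^ q : MulAut G) z *
              ((g ^ 0 : MulAut G) z)⁻¹ := by
          rw [← Finset.prod_range_succ, Finset.prod_range_succ']
          group
        rw [h1]
        have : (g ^ q : MulAut G) = 1 := by rw [← hg, pow_orderOf_eq_one]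
        rw [this]
        simp [mul_comm]
      | one => simp
      | mul a b _ _ ha hb =>
        simp only [map_mul, Finset.prod_mul_distrib, ha, hb, mul_one]
      | inv a _ ha =>
        simp only [map_inv, Finset.prod_inv_distrib, ha, inv_one]
    have hfix' : ∀ i : ℕ, (g ^ i : MulAut G) h = h := by
      intro i
      induction i with
      | zero => rfl
      | succ k ih => rw [pow_succ']; simp only [MulAut.mul_apply]; rw [ih, hfix]
    have := hN h hh
    rw [Finset.prod_congr rfl (fun i _ => hfix' i), Finset.prod_const, Finset.card_range] at this
    -- h ^ q = 1 and orderOf h ∣ card G coprime to q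
    have hord : orderOf h ∣ q := orderOf_dvd_of_pow_eq_one this
    have hordG : orderOf h ∣ Nat.card G := orderOf_dvd_natCard h
    rcases (Nat.Prime.eq_one_or_self_of_dvd hq _ hord) with h1 | h1
    · exact orderOf_eq_one_iff.mp h1
    · exact absurd (h1 ▸ hordG) hqG
  have hfixedcard : Nat.card (MulAction.fixedPoints (Subgroup.zpowers g) H) = 1 := by
    rw [Nat.card_eq_one_iff_unique]
    constructor
    · constructor
      intro a b
      have ha := hq1 a.1.1 a.1.2 ?_
      · have hb := hq1 b.1.1 b.1.2 ?_
        · ext; rw [ha, hb]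
        · have := b.2 ⟨g, Subgroup.mem_zpowers g⟩
          exact congrArg Subtype.val this
      · have := a.2 ⟨g, Subgroup.mem_zpowers g⟩
        exact congrArg Subtype.val this
    · refine ⟨⟨(1 : H), ?_⟩⟩
      intro a
      ext
      rw [hsmul]
      simp
  rw [hfixedcard] at hmod
  have hpos : 1 ≤ Nat.card H := Nat.one_le_iff_ne_zero.mpr Nat.card_pos.ne'
  exact (Nat.modEq_iff_dvd' hpos).mp hmod.symm
end
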